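/- arXiv:2004.08487 — 3 statements merged into one kernel-verified Lean document; each statement's English description precedes it below -/
import Mathlib

section
/- Every closed symmetric monoidal poset P that is a lattice admits a map f into some ∗-autonomous poset Q that is a lattice, such that f is an order-embedding (x ≤ y if and only if f(x) ≤ f(y)) and preserves all the structure: f(x · y) = f(x) · f(y), f(1) = 1, f(x ⊸ y) = f(x) ⊸ f(y), f(x ⊓ y) = f(x) ⊓ f(y), and f(x ⊔ y) = f(x) ⊔ f(y) for all x, y in P. -/
/-!
Statement 6: Every closed symmetric monoidal poset that is a lattice order-embeds in a
∗-autonomous poset that is a lattice, preserving the monoid structure, the unit, the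
internal hom, and binary meets and joins.
-/

universe u

namespace StarAutPoset

/-- A closed symmetric monoidal structure on a poset: a commutative monoid structure that is
monotone in each variable, together with an internal hom `himp` satisfying the residuation
law `x · y ≤ z ↔ x ≤ y ⊸ z`. -/
structure CSMStr (P : Type u) [PartialOrder P] where
  mul : P → P → P
  one : P
  mul_comm : ∀ x y : P, mul x y = mul y x
  mul_assoc : ∀ x y z : P, mul (mul x y) z = mul x (mul y z)
  mul_one : ∀ x : P, mul x one = x
  mul_mono : ∀ {x x' y y' : P}, x ≤ x' → y ≤ y' → mul x y ≤ mul x' y'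
  himp : P → P → P
  residuation : ∀ x y z : P, mul x y ≤ z ↔ x ≤ himp y z

/-- A ∗-autonomous structure on a poset: a closed symmetric monoidal structure together with
an element `bot` such that `(x ⊸ ⊥) ⊸ ⊥ = x` for all `x`. -/
structure StarAutStr (P : Type u) [PartialOrder P] extends CSMStr P where
  bot : P
  double_neg : ∀ x : P, himp (himp x bot) bot = x

namespace Aux

variable {P : Type u} [Lattice P] (s : CSMStr P)

abbrev E (P : Type u) := WithBot (WithTop P)

/-- extended multiplication -/
def emul : E P → E P → E P
  | none, _ => none
  | some _, none => none
  | some none, some _ => some none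
  | some _, some none => some none
  | some (some a), some (some b) => some (some (s.mul a b))

/-- extended internal hom -/
def ehimp : E P → E P → E P
  | none, _ => some none
  | some _, some none => some none
  | some none, _ => none
  | some (some _), none => none
  | some (some a), some (some b) => some (some (s.himp a b))

/-- explicit description of ≤ on E -/
def ele : E P → E P → Prop
  | none, _ => True
  | some _, none => False
  | some none, some none => True
  | some none, some (some _) => False
  | some (some _), some none => True
  | some (some a), some (some b) => a ≤ b

lemma le_iff : ∀ x y : E P, x ≤ y ↔ ele x y := by
  intro x y
  rcases x with _ | (_ | a) <;> rcases y with _ | (_ | b)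
  · simp [ele]; exact bot_le
  · simp only [ele, iff_true]; exact bot_le
  · simp only [ele, iff_true]; exact bot_le
  · simp only [ele, iff_false]; exact fun h => WithBot.not_coe_le_bot _ h
  · simp [ele]; exact le_rfl
  · simp only [ele, iff_false]
    exact fun h => WithTop.coe_ne_top (top_le_iff.mp
      ((WithBot.coe_le_coe (a := (⊤ : WithTop P)) (b := (some b : WithTop P))).mp h))
  · simp only [ele, iff_false]; exact fun h => WithBot.not_coe_le_bot _ h
  · simp only [ele, iff_true]; exact le_top
  · simp only [ele]; exact WithBot.coe_le_coe.trans WithTop.coe_le_coe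


def cE (a : P) : E P := some (some a)

lemma cE_le_cE {a b : P} : cE a ≤ cE b ↔ a ≤ b := by simp [cE, le_iff, ele]; exact WithBot.coe_le_coe.trans WithTop.coe_le_coe

lemma emul_comm : ∀ x y : E P, emul s x y = emul s y x := by
  intro x y
  rcases x with _ | (_ | a) <;> rcases y with _ | (_ | b) <;> simp [emul, s.mul_comm] <;> rfl

lemma emul_assoc : ∀ x y z : E P, emul s (emul s x y) z = emul s x (emul s y z) := by
  intro x y z
  rcases x with _ | (_ | a) <;> rcases y with _ | (_ | b) <;> rcases z with _ | (_ | c) <;>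
    simp [emul, s.mul_assoc] <;> rfl

lemma emul_one : ∀ x : E P, emul s x (cE s.one) = x := by
  intro x
  rcases x with _ | (_ | a) <;> simp [emul, cE, s.mul_one] <;> rfl

lemma wt_none_le {c : P} : ((⊤ : WithTop P) ≤ (c : WithTop P)) ↔ False :=
  iff_false_intro (fun h => WithTop.coe_ne_top (top_le_iff.mp h))

lemma eres : ∀ x y z : E P, emul s x y ≤ z ↔ x ≤ ehimp s y z := by
  intro x y z
  rw [le_iff, le_iff]
  rcases x with _ | (_ | a) <;> rcases y with _ | (_ | b) <;> rcases z with _ | (_ | c)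
  case some.some.some.some.some.some => exact s.residuation a b c
  all_goals exact Iff.rfl

lemma emul_mono : ∀ {x x' y y' : E P}, x ≤ x' → y ≤ y' → emul s x y ≤ emul s x' y' := by
  intro x x' y y' hx hy
  rw [le_iff] at *
  rcases x with _ | (_ | a) <;> rcases x' with _ | (_ | a') <;>
    rcases y with _ | (_ | b) <;> rcases y' with _ | (_ | b') <;>
    simp_all [emul, ele]
  exact s.mul_mono hx hy

lemma counit (y z : E P) : emul s (ehimp s y z) y ≤ z := (eres s _ _ _).mpr le_rfl

lemma ehimp_mono {x x' y y' : E P} (hx : x' ≤ x) (hy : y ≤ y') :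
    ehimp s x y ≤ ehimp s x' y' := by
  rw [← eres]
  exact le_trans (emul_mono s le_rfl hx) (le_trans (counit s x y) hy)

lemma ehimp_swap (a d f : E P) : f ≤ ehimp s a d ↔ a ≤ ehimp s f d := by
  rw [← eres, ← eres, emul_comm]

lemma ehimp_inf (e x y : E P) : ehimp s e (x ⊓ y) = ehimp s e x ⊓ ehimp s e y := by
  refine le_antisymm (le_inf (ehimp_mono s le_rfl inf_le_left)
    (ehimp_mono s le_rfl inf_le_right)) ?_
  rw [← eres]
  exact le_inf (le_trans (emul_mono s inf_le_left le_rfl) (counit s _ _))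
    (le_trans (emul_mono s inf_le_right le_rfl) (counit s _ _))

lemma ehimp_curry (e a d : E P) : ehimp s e (ehimp s a d) = ehimp s (emul s a e) d := by
  refine eq_of_forall_le_iff fun z => ?_
  rw [← eres, ← eres, ← eres, emul_assoc, emul_comm s e a]

lemma ehimp_top (a : E P) : ehimp s a (⊤ : E P) = (⊤ : E P) := by
  rcases a with _ | (_ | a) <;> rfl

lemma ehimp_one (b : E P) : ehimp s (cE s.one) b = b := by
  refine eq_of_forall_le_iff fun z => ?_
  rw [← eres, emul_one]

lemma cE_inf (a b : P) : cE (P := P) (a ⊓ b) = cE a ⊓ cE b := by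
  show ((↑(a ⊓ b) : WithTop P) : WithBot (WithTop P)) = _
  rw [WithTop.coe_inf, WithBot.coe_inf]
  rfl

lemma cE_sup (a b : P) : cE (P := P) (a ⊔ b) = cE a ⊔ cE b := by
  show ((↑(a ⊔ b) : WithTop P) : WithBot (WithTop P)) = _
  rw [WithTop.coe_sup, WithBot.coe_sup]
  rfl


open OrderDual in
def qmul (x y : E P × (E P)ᵒᵈ) : E P × (E P)ᵒᵈ :=
  (emul s x.1 y.1, toDual (ehimp s x.1 (ofDual y.2) ⊓ ehimp s y.1 (ofDual x.2)))

open OrderDual in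
def qhimp (x y : E P × (E P)ᵒᵈ) : E P × (E P)ᵒᵈ :=
  (ehimp s x.1 y.1 ⊓ ehimp s (ofDual y.2) (ofDual x.2),
   toDual (emul s x.1 (ofDual y.2)))

def qone : E P × (E P)ᵒᵈ := (cE s.one, OrderDual.toDual (⊤ : E P))

def qbot : E P × (E P)ᵒᵈ := ((⊤ : E P), OrderDual.toDual (cE s.one))

open OrderDual in
lemma qle (p q : E P × (E P)ᵒᵈ) :
    p ≤ q ↔ p.1 ≤ q.1 ∧ ofDual q.2 ≤ ofDual p.2 := Iff.rfl

open OrderDual in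
def tQ : StarAutStr (E P × (E P)ᵒᵈ) where
  mul := qmul s
  one := qone s
  mul_comm := by
    rintro ⟨a, b⟩ ⟨c, d⟩
    refine Prod.ext (emul_comm s a c) ?_
    show toDual _ = toDual _
    rw [inf_comm]
  mul_assoc := by
    rintro ⟨a, b⟩ ⟨c, d⟩ ⟨e, f⟩
    refine Prod.ext (emul_assoc s a c e) ?_
    show toDual _ = toDual _
    apply congrArg
    simp only [qmul, ofDual_toDual]
    rw [ehimp_inf, ehimp_inf, ehimp_curry, ehimp_curry, ehimp_curry, ehimp_curry,
      emul_comm s c a, emul_comm s e a, inf_assoc]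
  mul_one := by
    rintro ⟨a, b⟩
    refine Prod.ext (emul_one s a) ?_
    show toDual (ehimp s a (ofDual (toDual (⊤ : E P))) ⊓ ehimp s (cE s.one) (ofDual b)) = b
    rw [ofDual_toDual, ehimp_top, ehimp_one, top_inf_eq, toDual_ofDual]
  mul_mono := by
    intro x x' y y' hx hy
    rw [qle] at hx hy ⊢
    refine ⟨emul_mono s hx.1 hy.1, ?_⟩
    show ehimp s x'.1 (ofDual y'.2) ⊓ ehimp s y'.1 (ofDual x'.2) ≤
      ehimp s x.1 (ofDual y.2) ⊓ ehimp s y.1 (ofDual x.2)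
    exact le_inf (le_trans inf_le_left (ehimp_mono s hx.1 hy.2))
      (le_trans inf_le_right (ehimp_mono s hy.1 hx.2))
  himp := qhimp s
  residuation := by
    rintro ⟨a, b⟩ ⟨c, d⟩ ⟨e, f⟩
    rw [qle, qle]
    simp only [qmul, qhimp, ofDual_toDual]
    rw [le_inf_iff, le_inf_iff, eres s a c e, ehimp_swap s a (ofDual d) (ofDual f),
      ← eres s (ofDual f) c (ofDual b), emul_comm s c (ofDual f)]
    tauto
  bot := qbot s
  double_neg := by
    rintro ⟨a, b⟩
    simp only [qhimp, qbot, ofDual_toDual, ehimp_top, ehimp_one, emul_one, top_inf_eq]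
    exact Prod.ext rfl (toDual_ofDual b)

end Aux

open Aux OrderDual in
/-- Every closed symmetric monoidal poset that is a lattice admits an order-embedding into a
∗-autonomous poset that is a lattice, preserving multiplication, unit, internal hom, and
binary meets and joins. -/
theorem csm_lattice_embeds_in_star_autonomous_lattice
    (P : Type u) [Lattice P] (s : CSMStr P) :
    ∃ (Q : Type u) (instQ : Lattice Q),
      letI := instQ
      ∃ (t : StarAutStr Q) (f : P → Q),
        (∀ x y : P, x ≤ y ↔ f x ≤ f y) ∧
        (∀ x y : P, f (s.mul x y) = t.mul (f x) (f y)) ∧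
        f s.one = t.one ∧
        (∀ x y : P, f (s.himp x y) = t.himp (f x) (f y)) ∧
        (∀ x y : P, f (x ⊓ y) = f x ⊓ f y) ∧
        (∀ x y : P, f (x ⊔ y) = f x ⊔ f y) := by
  refine ⟨E P × (E P)ᵒᵈ, inferInstance, tQ s,
    fun x => (cE x, toDual (⊤ : E P)), ?_, ?_, ?_, ?_, ?_, ?_⟩
  · intro x y
    rw [qle]
    simp [cE_le_cE]
  · intro x y
    refine Prod.ext rfl ?_
    show toDual (⊤ : E P) = toDual (ehimp s (cE x) (ofDual (toDual (⊤ : E P))) ⊓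
      ehimp s (cE y) (ofDual (toDual (⊤ : E P))))
    rw [ofDual_toDual, ehimp_top, ehimp_top, top_inf_eq]
  · rfl
  · intro x y
    refine Prod.ext ?_ rfl
    show cE (s.himp x y) = ehimp s (cE x) (cE y) ⊓
      ehimp s (ofDual (toDual (⊤ : E P))) (ofDual (toDual (⊤ : E P)))
    rw [ofDual_toDual, ehimp_top, inf_top_eq]
    rfl
  · intro x y
    refine Prod.ext (cE_inf x y) ?_
    show toDual (⊤ : E P) = toDual (⊤ : E P) ⊓ toDual (⊤ : E P)
    rw [inf_idem]
  · intro x y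
    refine Prod.ext (cE_sup x y) ?_
    show toDual (⊤ : E P) = toDual (⊤ : E P) ⊔ toDual (⊤ : E P)
    rw [sup_idem]

end StarAutPoset
end

section
/- There exists a small symmetric monoidal closed category C possessing an initial object 0 such that for every ∗-autonomous category D and every fully faithful strong symmetric monoidal closed functor F : C ⥤ D, the object F(0) is not initial in D. In other words, not every symmetric monoidal closed category with an initial object admits a strong symmetric monoidal closed full embedding into a ∗-autonomous category preserving the initial object. -/
/-!
Statement 7: There is a small symmetric monoidal closed category with an initial object
such that no fully faithful strong symmetric monoidal closed functor into a ∗-autonomous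
category sends the initial object to an initial object.
-/

open CategoryTheory MonoidalCategory MonoidalClosed Limits

universe v u

namespace StarAutEmbedding

variable {C : Type u} [Category.{v} C] [MonoidalCategory C] [SymmetricCategory C]
  [MonoidalClosed C]

/-- The canonical double-dualization morphism `X ⟶ ((X ⊸ ⊥) ⊸ ⊥)`, the currying of the
evaluation `(X ⊸ ⊥) ⊗ X ⟶ ⊥` obtained from the braiding and the evaluation
`X ⊗ (X ⊸ ⊥) ⟶ ⊥`. -/
def doubleDual (bot X : C) : X ⟶ (ihom ((ihom X).obj bot)).obj bot :=
  MonoidalClosed.curry ((β_ ((ihom X).obj bot) X).hom ≫ (ihom.ev X).app bot)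

/-- A bundled ∗-autonomous category: a symmetric monoidal closed category equipped with
a dualizing object `bot`. -/
structure StarAut : Type (max (v + 1) (u + 1)) where
  carrier : Type u
  [cat : Category.{v} carrier]
  [mon : MonoidalCategory carrier]
  [sym : SymmetricCategory carrier]
  [closed : MonoidalClosed carrier]
  bot : carrier
  dualizing : ∀ X : carrier, IsIso (doubleDual bot X)

attribute [instance] StarAut.cat StarAut.mon StarAut.sym StarAut.closed

/-- The canonical internal-hom comparison morphism `F(A ⊸ B) ⟶ (F A ⊸ F B)` of a lax
monoidal functor: the currying of `μ` followed by `F` applied to the evaluation. -/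
def homComparison {C : Type u} {D : Type u₂} [Category.{v} C] [Category.{v₂} D]
    [MonoidalCategory C] [MonoidalClosed C] [MonoidalCategory D] [MonoidalClosed D]
    (F : C ⥤ D) [F.LaxMonoidal] (A B : C) :
    F.obj ((ihom A).obj B) ⟶ (ihom (F.obj A)).obj (F.obj B) :=
  MonoidalClosed.curry (Functor.LaxMonoidal.μ F A ((ihom A).obj B) ≫ F.map ((ihom.ev A).app B))

/-- A strong symmetric monoidal closed functor: a strong symmetric (= braided) monoidal
functor all of whose internal-hom comparison morphisms are isomorphisms. -/
structure StrongClosedFunctor (C : Type u) (D : Type u₂) [Category.{v} C] [Category.{v₂} D]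
    [MonoidalCategory C] [SymmetricCategory C] [MonoidalClosed C]
    [MonoidalCategory D] [SymmetricCategory D] [MonoidalClosed D] where
  F : C ⥤ D
  [braided : F.Braided]
  homIso : ∀ A B : C, IsIso (homComparison F A B)

/-- A bundled symmetric monoidal closed category. -/
structure SMC : Type (max (v + 1) (u + 1)) where
  carrier : Type u
  [cat : Category.{v} carrier]
  [mon : MonoidalCategory carrier]
  [sym : SymmetricCategory carrier]
  [closed : MonoidalClosed carrier]

attribute [instance] SMC.cat SMC.mon SMC.sym SMC.closed


/-! ### Auxiliary facts about initial objects in symmetric monoidal closed categories -/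

section Aux

variable {E : Type u} [Category.{v} E] [MonoidalCategory E] [SymmetricCategory E]
  [MonoidalClosed E]

/-- Tensoring (on the right) with an initial object gives an initial object. -/
noncomputable def isInitialTensorRight {k : E} (hk : IsInitial k) (X : E) :
    IsInitial (X ⊗ k) :=
  IsInitial.ofUniqueHom (fun Y => MonoidalClosed.uncurry (hk.to ((ihom X).obj Y)))
    (fun Y m => by
      have h : MonoidalClosed.curry m = hk.to ((ihom X).obj Y) := hk.hom_ext _ _
      have h2 := MonoidalClosed.uncurry_curry m
      rw [h] at h2
      exact h2.symm)

/-- Tensoring (on the left) with an initial object gives an initial object. -/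
noncomputable def isInitialTensorLeft {k : E} (hk : IsInitial k) (X : E) :
    IsInitial (k ⊗ X) :=
  (isInitialTensorRight hk X).ofIso (β_ X k)

/-- The internal hom out of an initial object is terminal. -/
noncomputable def isTerminalIhomOfInitial {k : E} (hk : IsInitial k) (b : E) :
    IsTerminal ((ihom k).obj b) :=
  IsTerminal.ofUniqueHom (fun Z => MonoidalClosed.curry ((isInitialTensorLeft hk Z).to b))
    (fun Z m => by
      have h : MonoidalClosed.uncurry m = (isInitialTensorLeft hk Z).to b :=
        (isInitialTensorLeft hk Z).hom_ext _ _
      have h2 := MonoidalClosed.curry_uncurry m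
      rw [h] at h2
      exact h2.symm)

end Aux

/-! ### The three-element chain as a symmetric monoidal closed category -/

instance : MonoidalCategory (Fin 3) where
  tensorObj x y := min x y
  whiskerLeft x _ _ g := homOfLE (min_le_min le_rfl (leOfHom g))
  whiskerRight f y := homOfLE (min_le_min (leOfHom f) le_rfl)
  tensorHom f g := homOfLE (min_le_min (leOfHom f) (leOfHom g))
  tensorUnit := 2
  associator x y z := eqToIso (min_assoc x y z)
  leftUnitor x := eqToIso (min_eq_right (by omega))
  rightUnitor x := eqToIso (min_eq_left (by omega))
  tensorHom_def := fun _ _ => Subsingleton.elim _ _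
  id_tensorHom_id := fun _ _ => Subsingleton.elim _ _
  tensorHom_comp_tensorHom := fun _ _ _ _ => Subsingleton.elim _ _
  whiskerLeft_id := fun _ _ => Subsingleton.elim _ _
  id_whiskerRight := fun _ _ => Subsingleton.elim _ _
  associator_naturality := fun _ _ _ => Subsingleton.elim _ _
  leftUnitor_naturality := fun _ => Subsingleton.elim _ _
  rightUnitor_naturality := fun _ => Subsingleton.elim _ _
  pentagon := fun _ _ _ _ => Subsingleton.elim _ _
  triangle := fun _ _ => Subsingleton.elim _ _

instance : BraidedCategory (Fin 3) where
  braiding x y := eqToIso (min_comm x y)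
  braiding_naturality_right := fun _ _ _ _ => Subsingleton.elim _ _
  braiding_naturality_left := fun _ _ => Subsingleton.elim _ _
  hexagon_forward := fun _ _ _ => Subsingleton.elim _ _
  hexagon_reverse := fun _ _ _ => Subsingleton.elim _ _

instance : SymmetricCategory (Fin 3) where
  symmetry := fun _ _ => Subsingleton.elim _ _

/-- Heyting implication on the three-element chain. -/
def himp3 (x y : Fin 3) : Fin 3 := if x ≤ y then 2 else y

lemma himp3_mono : ∀ x a b : Fin 3, a ≤ b → himp3 x a ≤ himp3 x b := by decide

lemma himp3_adj (x y z : Fin 3) : min x y ≤ z ↔ y ≤ himp3 x z := by revert x y z; decide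

instance : MonoidalClosed (Fin 3) where
  closed x :=
    { rightAdj :=
        { obj := himp3 x
          map := fun f => homOfLE (himp3_mono x _ _ (leOfHom f)) }
      adj := Adjunction.mkOfHomEquiv
        { homEquiv := fun y z =>
            { toFun := fun f => homOfLE ((himp3_adj x y z).mp (leOfHom f))
              invFun := fun g => homOfLE ((himp3_adj x y z).mpr (leOfHom g))
              left_inv := fun _ => Subsingleton.elim _ _
              right_inv := fun _ => Subsingleton.elim _ _ }
          homEquiv_naturality_left_symm := fun _ _ => Subsingleton.elim _ _
          homEquiv_naturality_right := fun _ _ => Subsingleton.elim _ _ } }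

/-- `0` is initial in the three-element chain. -/
noncomputable def isInitialZero3 : IsInitial (0 : Fin 3) :=
  IsInitial.ofUniqueHom (fun y => homOfLE (by omega)) (fun _ _ => Subsingleton.elim _ _)

/-- There exists a small symmetric monoidal closed category `𝒞` with an initial object `zero`
such that for every ∗-autonomous category `𝒟` and every fully faithful strong symmetric
monoidal closed functor `F : 𝒞 ⥤ 𝒟`, the object `F zero` is not initial in `𝒟`. -/
theorem exists_smcc_with_initial_not_preserved :
    ∃ (𝒞 : SMC.{0, 0}) (zero : 𝒞.carrier),
      Nonempty (IsInitial zero) ∧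
      ∀ (𝒟 : StarAut.{v, u}) (F : StrongClosedFunctor 𝒞.carrier 𝒟.carrier),
        F.F.Full → F.F.Faithful → ¬ Nonempty (IsInitial (F.F.obj zero)) := by
  refine ⟨⟨Fin 3⟩, 0, ⟨isInitialZero3⟩, ?_⟩
  rintro 𝒟 F hFull _ ⟨hk⟩
  letI := F.braided
  letI := hFull
  haveI := F.homIso (1 : Fin 3) 0
  haveI := F.homIso (0 : Fin 3) 0
  haveI := 𝒟.dualizing (F.F.obj 0)
  haveI := 𝒟.dualizing (F.F.obj 1)
  -- `(1 ⊸ 0) = 0` and `(0 ⊸ 0) = 𝟙_` in the three-element chain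
  have e1 : ((ihom (1 : Fin 3)).obj 0) = (0 : Fin 3) := by decide
  have e2 : ((ihom (0 : Fin 3)).obj 0) = 𝟙_ (Fin 3) := by decide
  -- `F 1 ⊸ F 0` is initial
  have hk' : IsInitial (F.F.obj ((ihom (1 : Fin 3)).obj 0)) := by rw [e1]; exact hk
  have h2 : IsInitial ((ihom (F.F.obj 1)).obj (F.F.obj 0)) :=
    hk'.ofIso (asIso (homComparison F.F 1 0))
  -- the unit of `𝒟` is terminal
  have hTkk : IsTerminal ((ihom (F.F.obj 0)).obj (F.F.obj 0)) := isTerminalIhomOfInitial hk _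
  have hT1 : IsTerminal ((ihom (F.F.obj 0)).obj 𝒟.bot) := isTerminalIhomOfInitial hk _
  have iso1 : 𝟙_ 𝒟.carrier ≅ (ihom (F.F.obj 0)).obj (F.F.obj 0) :=
    Functor.Monoidal.εIso F.F ≪≫ F.F.mapIso (eqToIso e2.symm) ≪≫ asIso (homComparison F.F 0 0)
  have hTunit : IsTerminal (𝟙_ 𝒟.carrier) := hTkk.ofIso iso1.symm
  have isoU : (ihom (F.F.obj 0)).obj 𝒟.bot ≅ 𝟙_ 𝒟.carrier := hT1.uniqueUpToIso hTunit
  have isoPre : (ihom (𝟙_ 𝒟.carrier)).obj 𝒟.bot ≅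
      (ihom ((ihom (F.F.obj 0)).obj 𝒟.bot)).obj 𝒟.bot :=
    { hom := (MonoidalClosed.pre isoU.hom).app 𝒟.bot
      inv := (MonoidalClosed.pre isoU.inv).app 𝒟.bot
      hom_inv_id := by
        rw [← NatTrans.comp_app, ← MonoidalClosed.pre_map, Iso.inv_hom_id,
          MonoidalClosed.pre_id, NatTrans.id_app]
      inv_hom_id := by
        rw [← NatTrans.comp_app, ← MonoidalClosed.pre_map, Iso.hom_inv_id,
          MonoidalClosed.pre_id, NatTrans.id_app] }
  -- `F 0` is isomorphic to the dualizing object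
  have isoK : F.F.obj 0 ≅ 𝒟.bot :=
    asIso (doubleDual 𝒟.bot (F.F.obj 0)) ≪≫ isoPre.symm ≪≫
      ((MonoidalClosed.unitNatIso (C := 𝒟.carrier)).app 𝒟.bot).symm
  -- hence `F 1 ⊸ ⊥` is initial, giving a point of `F 1`
  have h3 : IsInitial ((ihom (F.F.obj 1)).obj 𝒟.bot) := h2.ofIso ((ihom (F.F.obj 1)).mapIso isoK)
  have m1 : 𝟙_ 𝒟.carrier ⟶ (ihom ((ihom (F.F.obj 1)).obj 𝒟.bot)).obj 𝒟.bot :=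
    MonoidalClosed.curry ((ρ_ _).hom ≫ h3.to 𝒟.bot)
  have m3 : F.F.obj (𝟙_ (Fin 3)) ⟶ F.F.obj 1 :=
    (Functor.Monoidal.εIso F.F).inv ≫ m1 ≫ inv (doubleDual 𝒟.bot (F.F.obj 1))
  -- but there is no morphism `𝟙_ ⟶ 1` in the three-element chain
  exact absurd (leOfHom (F.F.preimage m3)) (by decide)

end StarAutEmbedding
end

section
/- Let C be a small category, S a small index set, and for each s ∈ S let c_s be a colimit cocone over a diagram A_s : J_s ⥤ C with J_s a small category. Let D be the full subcategory of the presheaf category [Cᵒᵖ, Type] consisting of those presheaves W that send each cocone c_s to a limit cone, i.e., such that the cone with apex W(apex of c_s) whose legs are W applied to the legs of c_s is a limit cone over the diagram W ∘ A_sᵒᵖ in Type. Then: (a) every representable presheaf lies in D; (b) D is a reflective subcategory of [Cᵒᵖ, Type] (the inclusion admits a left adjoint); and (c) the corestriction of the Yoneda embedding to a functor C ⥤ D is fully faithful and sends each cocone c_s to a colimit cocone in D. -/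
/-!
Statement 8: For a small category `C` and a family of colimit cocones `c s`, the full
subcategory `D` of presheaves sending each `c s` to a limit cone contains all
representables, is reflective in `[Cᵒᵖ, Type]`, and the corestricted Yoneda embedding
`C ⥤ D` is fully faithful and sends each `c s` to a colimit cocone.
-/

open CategoryTheory Limits

universe u

namespace ContinuousPresheaves

/-- A presheaf `W` sends a cocone `c` to a limit cone if the cone obtained by applying `W`
to `c` (i.e. `W.mapCone c.op`) is a limit cone in `Type`. -/
def SendsToLimit {C : Type u} [SmallCategory C] {J : Type u} [SmallCategory J] {A : J ⥤ C}
    (c : Cocone A) (W : Cᵒᵖ ⥤ Type u) : Prop :=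
  Nonempty (IsLimit (W.mapCone c.op))

open Opposite

section
variable {C : Type u} [SmallCategory C] {J : Type u} [SmallCategory J] {A : J ⥤ C}

lemma sendsToLimit_iff (c : Cocone A) (W : Cᵒᵖ ⥤ Type u) :
    SendsToLimit c W ↔ ∀ u ∈ (A.op ⋙ W).sections,
      ∃! x : W.obj (op c.pt), ∀ j : Jᵒᵖ, W.map ((c.ι.app j.unop).op) x = u j :=
  Types.isLimit_iff (W.mapCone c.op)

lemma SendsToLimit.of_iso {c : Cocone A} {W W' : Cᵒᵖ ⥤ Type u} (i : W ≅ W')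
    (h : SendsToLimit c W) : SendsToLimit c W' :=
  ⟨IsLimit.mapConeEquiv i h.some⟩

end

section
variable {C : Type u} [SmallCategory C] {S : Type u} {J : S → Type u} [∀ s, SmallCategory (J s)]
  {A : ∀ s, J s ⥤ C} {c : ∀ s, Cocone (A s)}

lemma closedUnderLimits (K : Type u) [SmallCategory K] :
    ObjectProperty.IsClosedUnderLimitsOfShape
      (fun W : Cᵒᵖ ⥤ Type u => ∀ s, SendsToLimit (c s) W) K := by
  constructor
  rintro W ⟨⟨⟨F, π, ht⟩, hF⟩⟩
  let t : Cone F := ⟨W, π⟩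
  change IsLimit t at ht
  change ∀ s, SendsToLimit (c s) t.pt
  intro s
  rw [sendsToLimit_iff]
  intro u hu
  -- evaluated limit cones in Type
  have hev : ∀ d : Cᵒᵖ, ∀ v ∈ (F ⋙ (evaluation Cᵒᵖ (Type u)).obj d).sections,
      ∃! x : t.pt.obj d, ∀ k : K, (t.π.app k).app d x = v k := fun d =>
    (Types.isLimit_iff (((evaluation Cᵒᵖ (Type u)).obj d).mapCone t)).mp
      ⟨isLimitOfPreserves _ ht⟩
  -- the pushed sections
  have hsec : ∀ k : K, (fun j : (J s)ᵒᵖ => (t.π.app k).app _ (u j)) ∈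
      ((A s).op ⋙ F.obj k).sections := by
    intro k j j' g
    dsimp
    rw [← NatTrans.naturality_apply (t.π.app k)]
    exact congrArg _ (hu g)
  choose xk hxk hxku using fun k : K =>
    ((sendsToLimit_iff (c s) (F.obj k)).mp (hF k s)) _ (hsec k)
  have hxksec : xk ∈ (F ⋙ (evaluation Cᵒᵖ (Type u)).obj (op (c s).pt)).sections := by
    intro k k' g
    refine hxku k' _ (fun j => ?_)
    dsimp
    rw [← NatTrans.naturality_apply (F.map g), hxk k j]
    exact types_congr_hom (NatTrans.congr_app (t.w g) _) (u j)
  obtain ⟨x, hx, hxu⟩ := hev _ _ hxksec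
  refine ⟨x, fun j => ?_, fun y hy => ?_⟩
  · -- componentwise equality via uniqueness at d' = op ((A s).obj j.unop)
    have hmem : (fun k => (t.π.app k).app (op ((A s).obj j.unop)) (u j)) ∈
        (F ⋙ (evaluation Cᵒᵖ (Type u)).obj (op ((A s).obj j.unop))).sections := by
      intro k k' g
      exact types_congr_hom (NatTrans.congr_app (t.w g) _) (u j)
    obtain ⟨z, hz, hzu⟩ := hev (op ((A s).obj j.unop)) _ hmem
    have h1 : t.pt.map ((c s).ι.app j.unop).op x = z := by
      refine hzu _ (fun k => ?_)
      exact (NatTrans.naturality_apply (t.π.app k) ((c s).ι.app j.unop).op x).trans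
        ((congrArg ((F.obj k).map ((c s).ι.app j.unop).op) (hx k)).trans (hxk k j))
    have h2 : u j = z := hzu _ (fun k => rfl)
    rw [h1, h2]
  · refine hxu _ (fun k => hxku k _ (fun j => ?_))
    exact (NatTrans.naturality_apply (t.π.app k) _ y).symm.trans (congrArg _ (hy j))

end
section
variable {C : Type u} [SmallCategory C] {S : Type u} {J : S → Type u} [∀ s, SmallCategory (J s)]
  {A : ∀ s, J s ⥤ C}

/-- Terms: the closure of elements of `P` under restriction and the `limit element`
operations determined by the cocones `c s`. -/
inductive Tm (c : ∀ s, Cocone (A s)) (P : Cᵒᵖ ⥤ Type u) : C → Type u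
  | base {x : C} (a : P.obj (op x)) : Tm c P x
  | res {x y : C} (f : y ⟶ x) (t : Tm c P x) : Tm c P y
  | elem (s : S) (fam : ∀ j : J s, Tm c P ((A s).obj j)) : Tm c P ((c s).pt)

variable (c : ∀ s, Cocone (A s)) {P X : Cᵒᵖ ⥤ Type u}

attribute [local instance] Classical.propDecidable

noncomputable def evT (h : P ⟶ X) : ∀ {x : C}, Tm c P x → Option (X.obj (op x))
  | _, .base a => some (h.app _ a)
  | _, .res f t => (evT h t).map (X.map f.op)
  | _, .elem s fam =>
      if hcond : ∃ x : X.obj (op (c s).pt),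
          ∀ j : J s, some (X.map ((c s).ι.app j).op x) = evT h (fam j)
      then some hcond.choose else none

variable (h : P ⟶ X)

/-- The subpresheaf of `X` of term-definable elements. -/
noncomputable def BObj : Cᵒᵖ ⥤ Type u where
  obj o := {v : X.obj o // ∃ t : Tm c P o.unop, evT c h t = some v}
  map {o o'} f := TypeCat.ofHom fun v => ⟨X.map f v.1, by
    obtain ⟨t, ht⟩ := v.2
    exact ⟨.res f.unop t, by rw [evT, ht]; rfl⟩⟩
  map_id o := by ext v; exact types_congr_hom (X.map_id o) v.1
  map_comp f g := by ext v; exact types_congr_hom (X.map_comp f g) v.1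

/-- The inclusion of `BObj` into `X`. -/
noncomputable def toX : BObj c h ⟶ X where
  app o := TypeCat.ofHom Subtype.val
  naturality _ _ _ := rfl

/-- The corestriction of `h` to `BObj`. -/
noncomputable def fromP : P ⟶ BObj c h where
  app o := TypeCat.ofHom fun a => ⟨h.app o a, .base a, rfl⟩
  naturality o o' f := by
    ext a
    apply Subtype.ext
    exact types_congr_hom (h.naturality f) a

lemma fromP_toX : fromP c h ≫ toX c h = h := rfl

lemma sendsToLimit_BObj (hX : ∀ s, SendsToLimit (c s) X) (s : S) :
    SendsToLimit (c s) (BObj c h) := by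
  rw [sendsToLimit_iff]
  intro u hu
  have hu' : (fun j => (u j).1) ∈ ((A s).op ⋙ X).sections := fun {j j'} g =>
    congrArg Subtype.val (hu g)
  obtain ⟨x, hx, hxu⟩ := (sendsToLimit_iff (c s) X).mp (hX s) _ hu'
  choose tj htj using fun j : (J s)ᵒᵖ => (u j).2
  have hcond : ∃ y : X.obj (op (c s).pt),
      ∀ j : J s, some (X.map ((c s).ι.app j).op y) = evT c h (tj (op j)) :=
    ⟨x, fun j => by rw [htj (op j)]; exact congrArg some (hx (op j))⟩
  have hval : evT c h (Tm.elem s (fun j => tj (op j))) = some x := by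
    rw [evT, dif_pos hcond]
    refine congrArg some (hxu _ (fun j => ?_))
    exact Option.some.inj ((hcond.choose_spec j.unop).trans (htj (op j.unop)))
  refine ⟨⟨x, ⟨_, hval⟩⟩, fun j => ?_, fun y hy => ?_⟩
  · apply Subtype.ext
    exact hx j
  · apply Subtype.ext
    exact hxu _ (fun j => congrArg Subtype.val (hy j))

/-- A small encoding of a presheaf equipped with a map from `P`, with carriers
given by sets of terms. -/
structure Datum (c : ∀ s, Cocone (A s)) (P : Cᵒᵖ ⥤ Type u) : Type u where
  mem : ∀ x : C, Set (Tm c P x)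
  map : ∀ {x y : C}, (y ⟶ x) → mem x → mem y
  map_id : ∀ (x : C) (t : mem x), map (𝟙 x) t = t
  map_comp : ∀ {x y z : C} (f : y ⟶ x) (g : z ⟶ y) (t : mem x),
    map (g ≫ f) t = map g (map f t)
  unit : ∀ (x : C), P.obj (op x) → mem x
  unit_nat : ∀ {x y : C} (f : y ⟶ x) (a : P.obj (op x)),
    map f (unit x a) = unit y (P.map f.op a)

/-- The presheaf encoded by a datum. -/
def Datum.realize {c : ∀ s, Cocone (A s)} {P : Cᵒᵖ ⥤ Type u} (d : Datum c P) :
    Cᵒᵖ ⥤ Type u where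
  obj o := d.mem o.unop
  map f := TypeCat.ofHom (d.map f.unop)
  map_id o := by ext t; exact congrArg Subtype.val (d.map_id o.unop t)
  map_comp f g := by ext t; exact congrArg Subtype.val (d.map_comp f.unop g.unop t)

/-- The morphism from `P` encoded by a datum. -/
def Datum.hom {c : ∀ s, Cocone (A s)} {P : Cᵒᵖ ⥤ Type u} (d : Datum c P) :
    P ⟶ d.realize where
  app o := TypeCat.ofHom fun a => d.unit o.unop a
  naturality o o' f := by ext a; exact (d.unit_nat f.unop a).symm

lemma solutionSet (c : ∀ s, Cocone (A s)) :
    SolutionSetCondition.{u} (ObjectProperty.ι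
      (fun W : Cᵒᵖ ⥤ Type u => ∀ s, SendsToLimit (c s) W)) := by
  intro P
  refine ⟨{d : Datum c P // ∀ s, SendsToLimit (c s) d.realize},
    fun i => ⟨i.1.realize, i.2⟩, fun i => i.1.hom, ?_⟩
  intro X h
  set B := BObj c (X := X.obj) h with hBdef
  have hB : ∀ s, SendsToLimit (c s) B := fun s => sendsToLimit_BObj c h X.property s
  set σ : ∀ x : C, B.obj (op x) → Tm c P x := fun x v => v.2.choose with hσdef
  have hσ : ∀ (x : C) (v : B.obj (op x)), evT c h (σ x v) = some v.1 :=
    fun x v => v.2.choose_spec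
  have hσinj : ∀ x : C, Function.Injective (σ x) := by
    intro x v v' e
    apply Subtype.ext
    exact Option.some.inj ((hσ x v).symm.trans (by rw [e, hσ x v']))
  set e : ∀ x : C, B.obj (op x) ≃ Set.range (σ x) :=
    fun x => Equiv.ofInjective _ (hσinj x) with hedef
  set d : Datum c P :=
    { mem := fun x => Set.range (σ x)
      map := fun {x y} f t => e y (B.map f.op ((e x).symm t))
      map_id := fun x t => by
        have h1 : B.map (𝟙 x).op ((e x).symm t) = (e x).symm t :=
          FunctorToTypes.map_id_apply B ((e x).symm t)
        show e x (B.map (𝟙 x).op ((e x).symm t)) = t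
        rw [h1, Equiv.apply_symm_apply]
      map_comp := fun {x y z} f g t => by
        have h1 : B.map (g ≫ f).op ((e x).symm t) =
            B.map g.op (B.map f.op ((e x).symm t)) :=
          FunctorToTypes.map_comp_apply B f.op g.op ((e x).symm t)
        show e z (B.map (g ≫ f).op ((e x).symm t)) =
          e z (B.map g.op ((e y).symm (e y (B.map f.op ((e x).symm t)))))
        rw [h1, Equiv.symm_apply_apply]
      unit := fun x a => e x ((fromP c h).app (op x) a)
      unit_nat := fun {x y} f a => by
        show e y (B.map f.op ((e x).symm (e x ((fromP c h).app (op x) a)))) =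
          e y ((fromP c h).app (op y) (P.map f.op a))
        rw [Equiv.symm_apply_apply]
        exact congrArg (e y) (types_congr_hom ((fromP c h).naturality f.op) a).symm } with hddef
  let isoB : d.realize ≅ B := NatIso.ofComponents
    (fun o => ((e o.unop).symm).toIso)
    (fun {o o'} f => by
      ext t
      exact Equiv.symm_apply_apply (e o'.unop) (B.map f ((e o.unop).symm t)))
  refine ⟨⟨d, fun s => (hB s).of_iso isoB.symm⟩,
    ObjectProperty.homMk (show d.realize ⟶ X.obj from isoB.hom ≫ toX c h), ?_⟩
  ext o a
  show (toX c h).app o (isoB.hom.app o (d.hom.app o a)) = h.app o a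
  have h2 : isoB.hom.app o (d.hom.app o a) = (fromP c h).app o a :=
    Equiv.symm_apply_apply (e o.unop) ((fromP c h).app o a)
  rw [h2]
  rfl


end

theorem continuous_presheaves_reflective_and_yoneda_corestriction
    (C : Type u) [SmallCategory C]
    (S : Type u) (J : S → Type u) [∀ s, SmallCategory (J s)]
    (A : ∀ s, J s ⥤ C) (c : ∀ s, Cocone (A s)) (hc : ∀ s, IsColimit (c s)) :
    -- (a) every representable presheaf lies in the full subcategory
    ∃ hy : ∀ X : C, ∀ s, SendsToLimit (c s) (yoneda.obj X),
      -- (b) the full subcategory is reflective: the inclusion has a left adjoint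
      (ObjectProperty.ι
        (fun W : Cᵒᵖ ⥤ Type u => ∀ s, SendsToLimit (c s) W)).IsRightAdjoint ∧
      -- (c) the corestriction of the Yoneda embedding is fully faithful ...
      (ObjectProperty.lift (fun W : Cᵒᵖ ⥤ Type u => ∀ s, SendsToLimit (c s) W)
        yoneda hy).Full ∧
      (ObjectProperty.lift (fun W : Cᵒᵖ ⥤ Type u => ∀ s, SendsToLimit (c s) W)
        yoneda hy).Faithful ∧
      -- ... and sends each cocone `c s` to a colimit cocone
      (∀ s, Nonempty (IsColimit
        ((ObjectProperty.lift (fun W : Cᵒᵖ ⥤ Type u => ∀ s, SendsToLimit (c s) W)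
          yoneda hy).mapCocone (c s)))) := by
  have hy : ∀ X : C, ∀ s, SendsToLimit (c s) (yoneda.obj X) :=
    fun X s => ⟨(Cocone.isColimitYonedaEquiv (c s)) (hc s) X⟩
  have hclosed : ∀ (K : Type u) [SmallCategory K],
      ObjectProperty.IsClosedUnderLimitsOfShape
        (fun W : Cᵒᵖ ⥤ Type u => ∀ s, SendsToLimit (c s) W) K :=
    fun K _ => closedUnderLimits K
  haveI : HasLimits
      (ObjectProperty.FullSubcategory (fun W : Cᵒᵖ ⥤ Type u => ∀ s, SendsToLimit (c s) W)) :=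
    ⟨fun K _ => by haveI := hclosed K; infer_instance⟩
  haveI : CreatesLimitsOfSize.{u, u} (ObjectProperty.ι
      (fun W : Cᵒᵖ ⥤ Type u => ∀ s, SendsToLimit (c s) W)) :=
    ⟨fun {K} _ => by haveI := hclosed K; infer_instance⟩
  refine ⟨hy, ?_, inferInstance, inferInstance, ?_⟩
  · exact isRightAdjoint_of_preservesLimits_of_solutionSetCondition _ (solutionSet c)
  · intro s
    refine ⟨(Cocone.isColimitYonedaEquiv _).symm ?_⟩
    intro W
    have hW : IsLimit (W.obj.mapCone (c s).op) := (W.property s).some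
    have e : W.obj ≅ (ObjectProperty.lift
        (fun W : Cᵒᵖ ⥤ Type u => ∀ s, SendsToLimit (c s) W) yoneda hy).op ⋙
          yoneda.obj W :=
      NatIso.ofComponents
        (fun o => Equiv.toIso
          { toFun := fun x => ObjectProperty.homMk (yonedaEquiv.symm x)
            invFun := fun g => yonedaEquiv g.hom
            left_inv := fun x => yonedaEquiv.apply_symm_apply x
            right_inv := fun g => InducedCategory.hom_ext (yonedaEquiv.symm_apply_apply g.hom) })
        (fun {o o'} f => by
          refine ConcreteCategory.hom_ext _ _ (fun x => ?_)
          exact InducedCategory.hom_ext (yonedaEquiv_symm_naturality_left f.unop W.obj x).symm)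
    exact IsLimit.mapConeEquiv e hW


end ContinuousPresheaves
end
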